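/- Let d ≥ 1 and let u, v : ℝ^d → ℝ be twice continuously differentiable functions with compact support, and let ε > 0. Then ∫_{{x ∈ ℝ^d : |u(x) − v(x)| < ε}} |∇u(x) − ∇v(x)|² dx ≤ ε ( ∫_{ℝ^d} |Δu(x)| dx + ∫_{ℝ^d} |Δv(x)| dx ). -/

import Mathlib

open MeasureTheory Real Set
open scoped RealInnerProductSpace
noncomputable section

/-- Spatial partial derivative in the `i`-th coordinate direction. -/
def pd {d : ℕ} (i : Fin d) (f : EuclideanSpace ℝ (Fin d) → ℝ)
    (x : EuclideanSpace ℝ (Fin d)) : ℝ :=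
  fderiv ℝ f x (EuclideanSpace.single i 1)

/-- Laplacian. -/
def lap {d : ℕ} (f : EuclideanSpace ℝ (Fin d) → ℝ) (x : EuclideanSpace ℝ (Fin d)) : ℝ :=
  ∑ i, pd i (pd i f) x

section aux

variable {d : ℕ}

local notation "E" => EuclideanSpace ℝ (Fin d)

lemma pd_contDiff (i : Fin d) {f : E → ℝ} (hf : ContDiff ℝ 2 f) :
    ContDiff ℝ 1 (pd i f) := by
  have h1 : ContDiff ℝ 1 (fderiv ℝ f) := hf.fderiv_right (by norm_num)
  exact h1.clm_apply contDiff_const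

lemma pd_hasCompactSupport (i : Fin d) {f : E → ℝ} (hf : HasCompactSupport f) :
    HasCompactSupport (pd i f) :=
  (hf.fderiv (𝕜 := ℝ)).comp_left (g := fun L : E →L[ℝ] ℝ => L (EuclideanSpace.single i 1)) rfl

lemma pd_continuous (i : Fin d) {f : E → ℝ} (hf : ContDiff ℝ 1 f) :
    Continuous (pd i f) :=
  (hf.continuous_fderiv one_ne_zero).clm_apply continuous_const

lemma pdpd_continuous (i : Fin d) {f : E → ℝ} (hf : ContDiff ℝ 2 f) :
    Continuous (pd i (pd i f)) :=
  pd_continuous i (pd_contDiff i hf)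

lemma pdpd_hasCompactSupport (i : Fin d) {f : E → ℝ} (hf : HasCompactSupport f) :
    HasCompactSupport (pd i (pd i f)) :=
  pd_hasCompactSupport i (pd_hasCompactSupport i hf)

lemma lap_continuous {f : E → ℝ} (hf : ContDiff ℝ 2 f) : Continuous (lap f) := by
  unfold lap
  exact continuous_finset_sum _ fun i _ => pdpd_continuous i hf

lemma sum_hasCompactSupport {ι : Type*} (s : Finset ι) (g : ι → E → ℝ)
    (h : ∀ i, HasCompactSupport (g i)) :
    HasCompactSupport (fun x => ∑ i ∈ s, g i x) := by
  classical
  induction s using Finset.induction_on with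
  | empty => simp only [Finset.sum_empty]; exact HasCompactSupport.zero
  | insert _ _ hi ih =>
      simp only [Finset.sum_insert hi]
      exact (h _).add ih

lemma lap_hasCompactSupport {f : E → ℝ} (hf : HasCompactSupport f) :
    HasCompactSupport (lap f) := by
  unfold lap
  exact sum_hasCompactSupport _ _ fun i => pdpd_hasCompactSupport i hf

lemma gradient_continuous {f : E → ℝ} (hf : ContDiff ℝ 2 f) : Continuous (gradient f) := by
  unfold gradient
  exact (InnerProductSpace.toDual ℝ E).symm.continuous.comp (hf.continuous_fderiv two_ne_zero)

lemma coord_eq_inner (y : E) (i : Fin d) : y i = ⟪y, EuclideanSpace.single i 1⟫ := by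
  rw [EuclideanSpace.inner_single_right]
  simp

lemma gradient_coord (f : E → ℝ) (x : E) (i : Fin d) :
    gradient f x i = pd i f x := by
  rw [coord_eq_inner (gradient f x) i, gradient, InnerProductSpace.toDual_symm_apply]
  rfl

lemma norm_gradient_sq_eq (f : E → ℝ) (x : E) :
    ‖gradient f x‖ ^ 2 = ∑ i, (pd i f x) ^ 2 := by
  rw [EuclideanSpace.norm_eq, sq_sqrt (by positivity)]
  refine Finset.sum_congr rfl fun i _ => ?_
  rw [gradient_coord]
  rw [Real.norm_eq_abs, sq_abs]

lemma gradient_sub_eq {u v : E → ℝ} (hu : ContDiff ℝ 2 u) (hv : ContDiff ℝ 2 v) (x : E) :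
    gradient u x - gradient v x = gradient (fun y => u y - v y) x := by
  simp only [gradient]
  rw [fderiv_fun_sub ((hu.differentiable two_ne_zero) x) ((hv.differentiable two_ne_zero) x), map_sub]

lemma pd_sub_eq {u v : E → ℝ} (hu : ContDiff ℝ 2 u) (hv : ContDiff ℝ 2 v) (i : Fin d) :
    pd i (fun y => u y - v y) = fun x => pd i u x - pd i v x := by
  funext x
  simp only [pd]
  rw [fderiv_fun_sub ((hu.differentiable two_ne_zero) x) ((hv.differentiable two_ne_zero) x)]
  rfl

lemma lap_sub_eq {u v : E → ℝ} (hu : ContDiff ℝ 2 u) (hv : ContDiff ℝ 2 v) (x : E) :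
    lap (fun y => u y - v y) x = lap u x - lap v x := by
  simp only [lap, ← Finset.sum_sub_distrib]
  refine Finset.sum_congr rfl fun i _ => ?_
  rw [pd_sub_eq hu hv i]
  show (fderiv ℝ (fun y => pd i u y - pd i v y) x) (EuclideanSpace.single i 1) = _
  rw [fderiv_fun_sub (((pd_contDiff i hu).differentiable one_ne_zero) x)
    (((pd_contDiff i hv).differentiable one_ne_zero) x)]
  rfl

end aux

section key

open intervalIntegral

/-- cutoff derivative profile -/
def eta (ε a t : ℝ) : ℝ := max 0 (min 1 ((ε - |t|) / (ε - a)))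

lemma eta_cont (ε a : ℝ) : Continuous (eta ε a) := by
  unfold eta; fun_prop

lemma eta_nonneg (ε a t : ℝ) : 0 ≤ eta ε a t := le_max_left _ _

lemma eta_le_one (ε a t : ℝ) : eta ε a t ≤ 1 := by
  unfold eta
  exact max_le zero_le_one (min_le_left _ _)

lemma eta_eq_one {ε a t : ℝ} (ha : a < ε) (ht : |t| ≤ a) : eta ε a t = 1 := by
  unfold eta
  have h1 : (1 : ℝ) ≤ (ε - |t|) / (ε - a) := by
    rw [le_div_iff₀ (by linarith)]
    linarith
  rw [min_eq_left h1]  -- min 1 x = 1 when 1 ≤ x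
  simp

lemma eta_eq_zero {ε a t : ℝ} (ht : ε ≤ |t|) (ha : a < ε) : eta ε a t = 0 := by
  unfold eta
  have h1 : (ε - |t|) / (ε - a) ≤ 0 := div_nonpos_of_nonpos_of_nonneg (by linarith) (by linarith)
  rw [max_eq_left (le_trans (min_le_right _ _) h1)]

/-- the C¹ truncation -/
def psi (ε a s : ℝ) : ℝ := ∫ t in (0:ℝ)..s, eta ε a t

lemma psi_hasDerivAt (ε a s : ℝ) : HasDerivAt (psi ε a) (eta ε a s) s :=
  integral_hasDerivAt_right ((eta_cont ε a).intervalIntegrable _ _)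
    ((eta_cont ε a).stronglyMeasurableAtFilter _ _) (eta_cont ε a).continuousAt

lemma psi_zero (ε a : ℝ) : psi ε a 0 = 0 := by simp [psi]

lemma psi_lipschitz (ε a : ℝ) : LipschitzWith 1 (psi ε a) := by
  apply lipschitzWith_of_nnnorm_deriv_le (fun s => (psi_hasDerivAt ε a s).differentiableAt)
  intro s
  rw [(psi_hasDerivAt ε a s).deriv]
  rw [← NNReal.coe_le_coe]
  simp only [coe_nnnorm, Real.norm_eq_abs, NNReal.coe_one]
  rw [abs_of_nonneg (eta_nonneg ε a s)]
  exact eta_le_one ε a s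

lemma psi_abs_le {ε a : ℝ} (hε : 0 < ε) (ha : a < ε) (s : ℝ) : |psi ε a s| ≤ ε := by
  have key : ∀ s : ℝ, 0 ≤ s → psi ε a s ≤ ε := by
    intro s hs
    rcases le_or_gt s ε with h | h
    · calc psi ε a s ≤ ∫ t in (0:ℝ)..s, (1:ℝ) := by
            apply integral_mono_on hs ((eta_cont ε a).intervalIntegrable _ _)
              (intervalIntegrable_const) (fun t _ => eta_le_one ε a t)
        _ = s := by simp
        _ ≤ ε := h
    · have : psi ε a s = (∫ t in (0:ℝ)..ε, eta ε a t) + ∫ t in ε..s, eta ε a t := by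
        rw [psi.eq_def, ← integral_add_adjacent_intervals ((eta_cont ε a).intervalIntegrable (0:ℝ) ε)
          ((eta_cont ε a).intervalIntegrable ε s)]
      rw [this]
      have h2 : (∫ t in ε..s, eta ε a t) = 0 := by
        have : EqOn (eta ε a) 0 (uIcc ε s) := by
          intro t ht
          rw [uIcc_of_le h.le] at ht
          exact eta_eq_zero (le_trans ht.1 (le_abs_self t)) ha
        rw [integral_congr this]; simp
      rw [h2, add_zero]
      calc (∫ t in (0:ℝ)..ε, eta ε a t) ≤ ∫ t in (0:ℝ)..ε, (1:ℝ) :=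
            integral_mono_on hε.le ((eta_cont ε a).intervalIntegrable _ _)
              (intervalIntegrable_const) (fun t _ => eta_le_one ε a t)
        _ = ε := by simp
  have nonneg : ∀ s : ℝ, 0 ≤ s → 0 ≤ psi ε a s := by
    intro s hs
    exact integral_nonneg hs (fun t _ => eta_nonneg ε a t)
  rcases le_or_gt 0 s with hs | hs
  · rw [abs_of_nonneg (nonneg s hs)]; exact key s hs
  · have h1 : psi ε a s = - ∫ t in s..(0:ℝ), eta ε a t := by
      rw [psi, integral_symm]
    have h2 : 0 ≤ ∫ t in s..(0:ℝ), eta ε a t :=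
      integral_nonneg hs.le (fun t _ => eta_nonneg ε a t)
    rw [h1, abs_neg, abs_of_nonneg h2]
    -- bound ∫ s..0 η ≤ ε
    rcases le_or_gt (-ε) s with h | h
    · calc (∫ t in s..(0:ℝ), eta ε a t) ≤ ∫ t in s..(0:ℝ), (1:ℝ) :=
          integral_mono_on hs.le ((eta_cont ε a).intervalIntegrable _ _)
            (intervalIntegrable_const) (fun t _ => eta_le_one ε a t)
        _ = -s := by simp
        _ ≤ ε := by linarith
    · have hsplit : (∫ t in s..(0:ℝ), eta ε a t)
          = (∫ t in s..(-ε), eta ε a t) + ∫ t in (-ε)..(0:ℝ), eta ε a t := by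
        rw [integral_add_adjacent_intervals ((eta_cont ε a).intervalIntegrable _ _)
          ((eta_cont ε a).intervalIntegrable _ _)]
      rw [hsplit]
      have h2' : (∫ t in s..(-ε), eta ε a t) = 0 := by
        have : EqOn (eta ε a) 0 (uIcc s (-ε)) := by
          intro t ht
          rw [uIcc_of_le h.le] at ht
          have : t ≤ -ε := ht.2
          exact eta_eq_zero (le_trans (by linarith [abs_nonneg t]) (neg_le_abs t)) ha
        rw [integral_congr this]; simp
      rw [h2', zero_add]
      calc (∫ t in (-ε)..(0:ℝ), eta ε a t) ≤ ∫ t in (-ε)..(0:ℝ), (1:ℝ) :=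
          integral_mono_on (by linarith) ((eta_cont ε a).intervalIntegrable _ _)
            (intervalIntegrable_const) (fun t _ => eta_le_one ε a t)
        _ = ε := by simp


variable {d : ℕ}

local notation "E" => EuclideanSpace ℝ (Fin d)

set_option maxHeartbeats 2000000 in
lemma key_ineq {w : E → ℝ} (hw : ContDiff ℝ 2 w) (hsw : HasCompactSupport w)
    {ε a : ℝ} (hε : 0 < ε) (ha : a < ε) :
    ∫ x in {x : E | |w x| ≤ a}, ‖gradient w x‖ ^ 2 ≤ ε * ∫ x, |lap w x| := by
  have hwd : Differentiable ℝ w := hw.differentiable two_ne_zero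
  have hwc : Continuous w := hw.continuous
  obtain ⟨Cw, hCw⟩ := ContDiff.lipschitzWith_of_hasCompactSupport hsw hw two_ne_zero
  set f := fun x : E => psi ε a (w x) with hfdef
  have hfd : ∀ x : E, HasFDerivAt f (eta ε a (w x) • fderiv ℝ w x) x := fun x =>
    (psi_hasDerivAt ε a (w x)).comp_hasFDerivAt x (hwd x).hasFDerivAt
  have hflip : LipschitzWith (1 * Cw) f := (psi_lipschitz ε a).comp hCw
  have hfcs : HasCompactSupport f := hsw.comp_left (psi_zero ε a)
  have hfc : Continuous f := hflip.continuous
  have hpdC : ∀ i, ContDiff ℝ 1 (pd i w) := fun i => pd_contDiff i hw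
  have hpdcs : ∀ i, HasCompactSupport (pd i w) := fun i => pd_hasCompactSupport i hsw
  have hpdc : ∀ i, Continuous (pd i w) := fun i => (hpdC i).continuous
  -- integrability facts
  have int1 : ∀ i : Fin d, Integrable
      (fun x => eta ε a (w x) * (pd i w x * pd i w x)) := by
    intro i
    apply Continuous.integrable_of_hasCompactSupport
    · exact ((eta_cont ε a).comp hwc).mul ((hpdc i).mul (hpdc i))
    · exact HasCompactSupport.mul_left ((hpdcs i).mul_left)
  have int2 : ∀ i : Fin d, Integrable
      (fun x => (-(pd i (pd i w) x)) * f x) := by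
    intro i
    apply Continuous.integrable_of_hasCompactSupport
    · exact (pdpd_continuous i hw).neg.mul hfc
    · exact HasCompactSupport.mul_right ((pdpd_hasCompactSupport i hsw).neg)
  -- integration by parts in each direction
  have ibp : ∀ i : Fin d, (∫ x, eta ε a (w x) * (pd i w x * pd i w x))
      = ∫ x, (-(pd i (pd i w) x)) * f x := by
    intro i
    obtain ⟨Ci, hCi⟩ :=
      ContDiff.lipschitzWith_of_hasCompactSupport (hpdcs i) (hpdC i) one_ne_zero
    have h0 := hflip.integral_lineDeriv_mul_eq (μ := volume) hCi (hpdcs i)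
      (EuclideanSpace.single i 1)
    have l1 : ∀ x : E, lineDeriv ℝ f x (EuclideanSpace.single i 1)
        = eta ε a (w x) * pd i w x := by
      intro x
      rw [(hfd x).differentiableAt.lineDeriv_eq_fderiv, (hfd x).fderiv]
      rfl
    have l2 : ∀ x : E, lineDeriv ℝ (pd i w) x (-(EuclideanSpace.single i 1))
        = -(pd i (pd i w) x) := by
      intro x
      rw [((hpdC i).differentiable one_ne_zero x).lineDeriv_eq_fderiv, map_neg]
      rfl
    simp only [l1, l2, mul_assoc] at h0
    exact h0
  -- nonnegativity and set facts
  have hSmeas : MeasurableSet {x : E | |w x| ≤ a} :=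
    (isClosed_le (continuous_abs.comp hwc) continuous_const).measurableSet
  have hgsq_cont : Continuous (fun x : E => ‖gradient w x‖ ^ 2) :=
    ((gradient_continuous hw).norm).pow 2
  have hgsq_cs : HasCompactSupport (fun x : E => ‖gradient w x‖ ^ 2) := by
    have : HasCompactSupport (fderiv ℝ w) := hsw.fderiv (𝕜 := ℝ)
    exact this.comp_left
      (g := fun L : E →L[ℝ] ℝ => ‖(InnerProductSpace.toDual ℝ E).symm L‖ ^ 2) (by simp)
  have intg : Integrable (fun x : E => eta ε a (w x) * ‖gradient w x‖ ^ 2) := by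
    apply Continuous.integrable_of_hasCompactSupport
    · exact ((eta_cont ε a).comp hwc).mul hgsq_cont
    · exact HasCompactSupport.mul_left hgsq_cs
  -- chain of (in)equalities
  have step1 : ∫ x in {x : E | |w x| ≤ a}, ‖gradient w x‖ ^ 2
      = ∫ x in {x : E | |w x| ≤ a}, eta ε a (w x) * ‖gradient w x‖ ^ 2 := by
    refine setIntegral_congr_fun hSmeas fun x hx => ?_
    rw [eta_eq_one ha hx, one_mul]
  have step2 : ∫ x in {x : E | |w x| ≤ a}, eta ε a (w x) * ‖gradient w x‖ ^ 2
      ≤ ∫ x, eta ε a (w x) * ‖gradient w x‖ ^ 2 := by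
    apply setIntegral_le_integral intg
    filter_upwards with x
    exact mul_nonneg (eta_nonneg ε a (w x)) (by positivity)
  have step3 : ∫ x, eta ε a (w x) * ‖gradient w x‖ ^ 2
      = ∑ i, ∫ x, eta ε a (w x) * (pd i w x * pd i w x) := by
    rw [← integral_finset_sum _ fun i _ => int1 i]
    congr 1
    funext x
    rw [norm_gradient_sq_eq, Finset.mul_sum]
    exact Finset.sum_congr rfl fun i _ => by ring
  have step4 : (∑ i, ∫ x, eta ε a (w x) * (pd i w x * pd i w x))
      = ∫ x, (-(lap w x)) * f x := by
    simp only [fun i : Fin d => ibp i]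
    rw [← integral_finset_sum _ fun i _ => int2 i]
    congr 1
    funext x
    rw [← Finset.sum_mul, lap]
    congr 1
    rw [← Finset.sum_neg_distrib]
  have intlapf : Integrable (fun x => (-(lap w x)) * f x) := by
    apply Continuous.integrable_of_hasCompactSupport
    · exact (lap_continuous hw).neg.mul hfc
    · exact HasCompactSupport.mul_right ((lap_hasCompactSupport hsw).neg)
  have intabslap : Integrable (fun x => |lap w x| * ε) := by
    apply Continuous.integrable_of_hasCompactSupport
    · exact ((lap_continuous hw).abs).mul continuous_const
    · exact HasCompactSupport.mul_right ((lap_hasCompactSupport hsw).abs)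
  have step5 : ∫ x, (-(lap w x)) * f x ≤ ∫ x, |lap w x| * ε := by
    apply integral_mono intlapf intabslap
    intro x
    calc (-(lap w x)) * f x ≤ |(-(lap w x)) * f x| := le_abs_self _
      _ = |lap w x| * |f x| := by rw [abs_mul, abs_neg]
      _ ≤ |lap w x| * ε := by
          exact mul_le_mul_of_nonneg_left (psi_abs_le hε ha (w x)) (abs_nonneg _)
  have step6 : ∫ x, |lap w x| * ε = ε * ∫ x, |lap w x| := by
    rw [MeasureTheory.integral_mul_const, mul_comm]
  linarith [step1, step2, step3, step4, step5, step6,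
    le_of_eq step3, le_of_eq step4]

end key

end


section main

variable {d : ℕ}

local notation "E" => EuclideanSpace ℝ (Fin d)

set_option maxHeartbeats 2000000 in
/-- the truncation estimate: on the set where `|u − v| < ε`, the squared
gradient of the difference is controlled by `ε` times the `L¹` norms of the Laplacians. -/
theorem stmt12 (d : ℕ) (hd : 1 ≤ d)
    (u v : EuclideanSpace ℝ (Fin d) → ℝ)
    (hu : ContDiff ℝ 2 u) (hv : ContDiff ℝ 2 v)
    (hsu : HasCompactSupport u) (hsv : HasCompactSupport v)
    (ε : ℝ) (hε : 0 < ε) :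
    (∫ x in {x : EuclideanSpace ℝ (Fin d) | |u x - v x| < ε},
        ‖gradient u x - gradient v x‖ ^ 2)
      ≤ ε * ((∫ x, |lap u x|) + (∫ x, |lap v x|)) := by
  set w := fun x : EuclideanSpace ℝ (Fin d) => u x - v x with hwdef
  have hw : ContDiff ℝ 2 w := hu.sub hv
  have hsw : HasCompactSupport w := by
    have h1 : w = fun x => u x + (-(v x)) := by
      funext x; rw [hwdef]; ring
    rw [h1]
    exact hsu.add hsv.neg
  have hwc : Continuous w := hw.continuous
  have hgr : (fun x : EuclideanSpace ℝ (Fin d) => ‖gradient u x - gradient v x‖ ^ 2)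
      = fun x => ‖gradient w x‖ ^ 2 := by
    funext x
    rw [gradient_sub_eq hu hv x]
  rw [hgr]
  -- global integrability of the squared gradient
  have hgsq_cont : Continuous (fun x : EuclideanSpace ℝ (Fin d) => ‖gradient w x‖ ^ 2) :=
    ((gradient_continuous hw).norm).pow 2
  have hgsq_cs : HasCompactSupport
      (fun x : EuclideanSpace ℝ (Fin d) => ‖gradient w x‖ ^ 2) := by
    have h0 : HasCompactSupport (fderiv ℝ w) := hsw.fderiv (𝕜 := ℝ)
    exact h0.comp_left
      (g := fun L : EuclideanSpace ℝ (Fin d) →L[ℝ] ℝ =>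
        ‖(InnerProductSpace.toDual ℝ (EuclideanSpace ℝ (Fin d))).symm L‖ ^ 2) (by simp)
  have hgsq_int : Integrable (fun x : EuclideanSpace ℝ (Fin d) => ‖gradient w x‖ ^ 2) :=
    hgsq_cont.integrable_of_hasCompactSupport hgsq_cs
  -- monotone family of sets
  set S : ℕ → Set (EuclideanSpace ℝ (Fin d)) :=
    fun n => {x | |w x| ≤ ε - ε / (n + 2)} with hSdef
  have haux : ∀ n : ℕ, ε - ε / ((n : ℝ) + 2) < ε := by
    intro n
    have : 0 < ε / ((n : ℝ) + 2) := by positivity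
    linarith
  have hmeas : ∀ n, MeasurableSet (S n) := fun n =>
    (isClosed_le (continuous_abs.comp hwc) continuous_const).measurableSet
  have hmono : Monotone S := by
    intro m n hmn x hx
    have h2 : ε / ((n : ℝ) + 2) ≤ ε / ((m : ℝ) + 2) := by
      apply div_le_div_of_nonneg_left hε.le (by positivity)
      have : (m : ℝ) ≤ n := Nat.cast_le.mpr hmn
      linarith
    simp only [hSdef, mem_setOf_eq] at hx ⊢
    linarith
  have hUnion : (⋃ n, S n) = {x : EuclideanSpace ℝ (Fin d) | |w x| < ε} := by
    apply Subset.antisymm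
    · refine iUnion_subset fun n x hx => ?_
      simp only [hSdef, mem_setOf_eq] at hx ⊢
      exact lt_of_le_of_lt hx (haux n)
    · intro x hx
      simp only [mem_setOf_eq] at hx
      have hr : 0 < ε - |w x| := by linarith
      obtain ⟨n, hn⟩ := exists_nat_gt (ε / (ε - |w x|))
      refine mem_iUnion.mpr ⟨n, ?_⟩
      simp only [hSdef, mem_setOf_eq]
      have h1 : ε / ((n : ℝ) + 2) ≤ ε - |w x| := by
        rw [div_le_iff₀ (by positivity)]
        have h2 : ε / (ε - |w x|) ≤ (n : ℝ) + 2 := by linarith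
        calc ε = (ε / (ε - |w x|)) * (ε - |w x|) := by field_simp
          _ ≤ ((n : ℝ) + 2) * (ε - |w x|) := by
              exact mul_le_mul_of_nonneg_right h2 hr.le
          _ = (ε - |w x|) * ((n : ℝ) + 2) := by ring
      linarith
  have htend := tendsto_setIntegral_of_monotone hmeas hmono (hgsq_int.integrableOn)
  rw [hUnion] at htend
  -- integrability of the Laplacians
  have intu : Integrable (fun x => |lap u x|) :=
    ((lap_continuous hu).abs).integrable_of_hasCompactSupport (lap_hasCompactSupport hsu).abs
  have intv : Integrable (fun x => |lap v x|) :=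
    ((lap_continuous hv).abs).integrable_of_hasCompactSupport (lap_hasCompactSupport hsv).abs
  have intw : Integrable (fun x => |lap w x|) :=
    ((lap_continuous hw).abs).integrable_of_hasCompactSupport (lap_hasCompactSupport hsw).abs
  have hlapbound : ∫ x, |lap w x| ≤ (∫ x, |lap u x|) + ∫ x, |lap v x| := by
    rw [← integral_add intu intv]
    apply integral_mono intw (intu.add intv)
    intro x
    simp only [Pi.add_apply]
    rw [lap_sub_eq hu hv x]
    exact abs_sub _ _
  have hbound : ∀ n, ∫ x in S n, ‖gradient w x‖ ^ 2
      ≤ ε * ((∫ x, |lap u x|) + ∫ x, |lap v x|) := by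
    intro n
    refine (key_ineq hw hsw hε (haux n)).trans ?_
    exact mul_le_mul_of_nonneg_left hlapbound hε.le
  exact le_of_tendsto htend (Filter.Eventually.of_forall hbound)


end main
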